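/- arXiv:2403.12890 — 5 statements merged into one kernel-verified Lean document; each statement's English description precedes it below -/
import Mathlib

section
/- Let P, Q ⊆ ℝⁿ be convex polytopes such that P ∪ Q is convex. Then [P ∪ Q, o] = [P, o] ∪ [Q, o] and [P ∩ Q, o] = [P, o] ∩ [Q, o], where [A, o] denotes the convex hull of A and the origin. -/
open Set

/-- A (nonempty, compact) convex polytope: the convex hull of a nonempty finite set. -/
def IsPolytope {n : ℕ} (P : Set (Fin n → ℝ)) : Prop :=
  ∃ S : Finset (Fin n → ℝ), S.Nonempty ∧ P = convexHull ℝ (S : Set (Fin n → ℝ))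

lemma IsPolytope.isClosed {n : ℕ} {P : Set (Fin n → ℝ)} (hP : IsPolytope P) : IsClosed P := by
  obtain ⟨S, -, rfl⟩ := hP
  exact (S.finite_toSet.isCompact_convexHull ℝ).isClosed

lemma IsPolytope.convex {n : ℕ} {P : Set (Fin n → ℝ)} (hP : IsPolytope P) : Convex ℝ P := by
  obtain ⟨S, -, rfl⟩ := hP
  exact convex_convexHull ℝ _

lemma IsPolytope.nonempty {n : ℕ} {P : Set (Fin n → ℝ)} (hP : IsPolytope P) : P.Nonempty := by
  obtain ⟨S, hS, rfl⟩ := hP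
  obtain ⟨x, hx⟩ := hS
  exact ⟨x, subset_convexHull ℝ _ hx⟩

lemma hull_zero_eq {n : ℕ} {A : Set (Fin n → ℝ)} (hA : Convex ℝ A) (hne : A.Nonempty) :
    convexHull ℝ (A ∪ {0}) = convexJoin ℝ A {0} := by
  rw [convexHull_union hne (singleton_nonempty 0), hA.convexHull_eq, convexHull_singleton]

lemma mem_join_zero {n : ℕ} {A : Set (Fin n → ℝ)} {x : Fin n → ℝ} :
    x ∈ convexJoin ℝ A ({0} : Set (Fin n → ℝ)) ↔
      ∃ t : ℝ, 0 ≤ t ∧ t ≤ 1 ∧ ∃ a ∈ A, x = t • a := by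
  rw [mem_convexJoin]
  constructor
  · rintro ⟨a, ha, b, hb, u, v, hu, hv, huv, hx⟩
    rw [mem_singleton_iff] at hb
    subst hb
    exact ⟨u, hu, by linarith, a, ha, by rw [← hx]; simp⟩
  · rintro ⟨t, ht0, ht1, a, ha, rfl⟩
    exact ⟨a, ha, 0, rfl, t, 1 - t, ht0, by linarith, by ring, by simp⟩

/-- Two closed sets whose union is convex: every segment from one to the other meets both. -/
lemma exists_seg_inter {n : ℕ} {P Q : Set (Fin n → ℝ)} (hPc : IsClosed P) (hQc : IsClosed Q)
    (hU : Convex ℝ (P ∪ Q)) {p q : Fin n → ℝ} (hp : p ∈ P) (hq : q ∈ Q) :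
    ∃ r ∈ segment ℝ q p, r ∈ P ∧ r ∈ Q := by
  have hseg : segment ℝ q p ⊆ P ∪ Q := hU.segment_subset (Or.inr hq) (Or.inl hp)
  have hconn : IsPreconnected (segment ℝ q p) := (convex_segment q p).isPreconnected
  obtain ⟨r, hr, hrP, hrQ⟩ := isPreconnected_closed_iff.1 hconn P Q hPc hQc hseg
    ⟨p, right_mem_segment ℝ q p, hp⟩ ⟨q, left_mem_segment ℝ q p, hq⟩
  exact ⟨r, hr, hrP, hrQ⟩

lemma aux_inter {n : ℕ} {P Q : Set (Fin n → ℝ)} (hPc : IsClosed P) (hQc : IsClosed Q)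
    (hU : Convex ℝ (P ∪ Q)) {a b : ℝ} {p q : Fin n → ℝ}
    (ha0 : 0 ≤ a) (hb0 : 0 ≤ b) (hb1 : b ≤ 1) (hp : p ∈ P) (hq : q ∈ Q)
    (hx : a • p = b • q) (hab : a ≤ b) :
    ∃ t : ℝ, 0 ≤ t ∧ t ≤ 1 ∧ ∃ r ∈ P ∩ Q, a • p = t • r := by
  obtain ⟨r, hrseg, hrP, hrQ⟩ := exists_seg_inter hPc hQc hU hp hq
  rcases eq_or_lt_of_le ha0 with rfl | ha0'
  · exact ⟨0, le_refl 0, zero_le_one, r, ⟨hrP, hrQ⟩, by simp⟩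
  have hb0' : 0 < b := lt_of_lt_of_le ha0' hab
  have hq_eq : q = (a / b) • p := by
    have h1 : b⁻¹ • (b • q) = b⁻¹ • (a • p) := by rw [hx]
    rw [smul_smul, smul_smul, inv_mul_cancel₀ hb0'.ne', one_smul] at h1
    rw [h1, div_eq_inv_mul]
  obtain ⟨u, v, hu, hv, huv, hr⟩ := hrseg
  have hab1 : a / b ≤ 1 := by rw [div_le_one hb0']; exact hab
  have hab0 : 0 < a / b := div_pos ha0' hb0'
  have hrc : r = (u * (a / b) + v) • p := by
    rw [← hr, hq_eq, smul_smul, add_smul]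
  have hcge : a / b ≤ u * (a / b) + v := by nlinarith
  have hc0 : 0 < u * (a / b) + v := lt_of_lt_of_le hab0 hcge
  have hc1 : u * (a / b) + v ≤ 1 := by nlinarith
  have hac : a ≤ u * (a / b) + v := by
    have h2 : a ≤ a / b := by rw [le_div_iff₀ hb0']; nlinarith
    linarith
  refine ⟨a / (u * (a / b) + v), by positivity,
    by rw [div_le_one hc0]; exact hac, r, ⟨hrP, hrQ⟩, ?_⟩
  rw [hrc, smul_smul, div_mul_cancel₀ _ hc0.ne']

/-- For polytopes `P, Q` with `P ∪ Q` convex: `[P ∪ Q, o] = [P, o] ∪ [Q, o]` and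
`[P ∩ Q, o] = [P, o] ∩ [Q, o]`, where `[A, o]` is the convex hull of `A` and the origin. -/
theorem convexHull_origin_union_inter {n : ℕ} (P Q : Set (Fin n → ℝ))
    (hP : IsPolytope P) (hQ : IsPolytope Q) (hU : Convex ℝ (P ∪ Q)) :
    convexHull ℝ ((P ∪ Q) ∪ {0}) = convexHull ℝ (P ∪ {0}) ∪ convexHull ℝ (Q ∪ {0}) ∧
    convexHull ℝ ((P ∩ Q) ∪ {0}) = convexHull ℝ (P ∪ {0}) ∩ convexHull ℝ (Q ∪ {0}) := by
  have hPconv := hP.convex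
  have hQconv := hQ.convex
  have hPne := hP.nonempty
  have hQne := hQ.nonempty
  obtain ⟨p0, hp0⟩ := hP.nonempty
  obtain ⟨q0, hq0⟩ := hQ.nonempty
  obtain ⟨r0, -, hr0P, hr0Q⟩ := exists_seg_inter hP.isClosed hQ.isClosed hU hp0 hq0
  have hPQne : (P ∩ Q).Nonempty := ⟨r0, hr0P, hr0Q⟩
  constructor
  · rw [hull_zero_eq hU (hPne.mono subset_union_left),
      hull_zero_eq hPconv hPne, hull_zero_eq hQconv hQne, convexJoin_union_left]
  · apply Subset.antisymm
    · exact subset_inter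
        (convexHull_mono (union_subset_union_left _ inter_subset_left))
        (convexHull_mono (union_subset_union_left _ inter_subset_right))
    · rw [hull_zero_eq (hPconv.inter hQconv) hPQne,
        hull_zero_eq hPconv hPne, hull_zero_eq hQconv hQne]
      rintro x ⟨hxP, hxQ⟩
      rw [mem_join_zero] at hxP hxQ ⊢
      obtain ⟨a, ha0, ha1, p, hp, rfl⟩ := hxP
      obtain ⟨b, hb0, hb1, q, hq, hx⟩ := hxQ
      rcases le_total a b with hab | hab
      · exact aux_inter hP.isClosed hQ.isClosed hU ha0 hb0 hb1 hp hq hx hab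
      · obtain ⟨t, ht0, ht1, r, hr, heq⟩ :=
          aux_inter hQ.isClosed hP.isClosed (by rwa [union_comm]) hb0 ha0 ha1 hq hp hx.symm hab
        exact ⟨t, ht0, ht1, r, ⟨hr.2, hr.1⟩, hx.trans heq⟩
end

section
/- If Z is a valuation on convex polytopes in ℝⁿ taking values in an abelian group, then the map P ↦ Z([P, o]) is also a valuation on the set of convex polytopes. -/
lemma mem_seg0 {E : Type*} [AddCommGroup E] [Module ℝ E] {x z : E} :
    x ∈ segment ℝ 0 z ↔ ∃ t : ℝ, 0 ≤ t ∧ t ≤ 1 ∧ x = t • z := by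
  rw [segment_eq_image]
  simp [eq_comm, Set.mem_Icc, and_assoc]

lemma hull0_eq {E : Type*} [AddCommGroup E] [Module ℝ E] {C : Set E}
    (hC : Convex ℝ C) (hne : C.Nonempty) :
    convexHull ℝ (C ∪ {0}) = ⋃ z ∈ C, segment ℝ 0 z := by
  rw [Set.union_singleton, convexHull_insert hne, hC.convexHull_eq]
  ext x
  simp [mem_convexJoin]

namespace ValAux

variable {n : ℕ}

lemma poly_convex {P : Set (Fin n → ℝ)} (h : IsPolytope P) : Convex ℝ P := by
  obtain ⟨S, -, rfl⟩ := h; exact convex_convexHull ℝ _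

lemma poly_nonempty {P : Set (Fin n → ℝ)} (h : IsPolytope P) : P.Nonempty := by
  obtain ⟨S, hS, rfl⟩ := h
  exact hS.to_set.mono (subset_convexHull ℝ _)

lemma poly_closed {P : Set (Fin n → ℝ)} (h : IsPolytope P) : IsClosed P := by
  obtain ⟨S, -, rfl⟩ := h
  exact (S.finite_toSet.isCompact_convexHull ℝ).isClosed

lemma poly_hull0 {P : Set (Fin n → ℝ)} (h : IsPolytope P) :
    IsPolytope (convexHull ℝ (P ∪ {0})) := by
  obtain ⟨S, hS, rfl⟩ := h
  refine ⟨insert 0 S, ⟨0, Finset.mem_insert_self _ _⟩, ?_⟩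
  rw [Set.union_singleton, Finset.coe_insert, Set.insert_eq, Set.insert_eq,
    convexHull_convexHull_union_right]

/-- key union identity -/
lemma hull0_union {P Q : Set (Fin n → ℝ)} (hP : IsPolytope P) (hQ : IsPolytope Q)
    (hU : IsPolytope (P ∪ Q)) :
    convexHull ℝ ((P ∪ Q) ∪ {0}) = convexHull ℝ (P ∪ {0}) ∪ convexHull ℝ (Q ∪ {0}) := by
  rw [hull0_eq (poly_convex hP) (poly_nonempty hP),
    hull0_eq (poly_convex hQ) (poly_nonempty hQ),
    hull0_eq (poly_convex hU) (poly_nonempty hU),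
    Set.biUnion_union]

/-- half of the intersection identity, with WLOG `s ≤ t` -/
lemma key {P Q : Set (Fin n → ℝ)} (hP : IsPolytope P) (hQ : IsPolytope Q)
    (hU : IsPolytope (P ∪ Q)) (hI : (P ∩ Q).Nonempty) {x p q : Fin n → ℝ} {s t : ℝ}
    (hp : p ∈ P) (hq : q ∈ Q) (hs : 0 ≤ s) (ht1 : t ≤ 1) (hst : s ≤ t)
    (hxp : x = s • p) (hxq : x = t • q) :
    ∃ r ∈ P ∩ Q, ∃ c : ℝ, 0 ≤ c ∧ c ≤ 1 ∧ x = c • r := by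
  rcases eq_or_lt_of_le hs with hs0 | hs0
  · obtain ⟨r, hr⟩ := hI
    exact ⟨r, hr, 0, le_refl _, zero_le_one, by rw [hxp, ← hs0, zero_smul, zero_smul]⟩
  have ht0 : 0 < t := lt_of_lt_of_le hs0 hst
  have hqp : q = (s / t) • p := by
    have : t • q = s • p := by rw [← hxq, hxp]
    rw [div_eq_mul_inv, mul_comm, mul_smul, ← this, inv_smul_smul₀ ht0.ne']
  -- segment from q to p lies in P ∪ Q
  have hseg : segment ℝ q p ⊆ P ∪ Q :=
    (poly_convex hU).segment_subset (Or.inr hq) (Or.inl hp)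
  have hconn : IsPreconnected (segment ℝ q p) := (convex_segment q p).isPreconnected
  obtain ⟨r, hrseg, hrP, hrQ⟩ :=
    isPreconnected_closed_iff.mp hconn P Q (poly_closed hP) (poly_closed hQ) hseg
      ⟨p, right_mem_segment ℝ q p, hp⟩ ⟨q, left_mem_segment ℝ q p, hq⟩
  obtain ⟨a, b, ha, hb, hab, hr⟩ := hrseg
  have hst1 : s / t ≤ 1 := (div_le_one ht0).mpr hst
  have hst0 : 0 < s / t := div_pos hs0 ht0
  set c' : ℝ := a * (s / t) + b with hc'
  have hrc : r = c' • p := by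
    rw [← hr, hqp, smul_smul, ← add_smul]
  have hc'ge : s / t ≤ c' := by nlinarith
  have hc'pos : 0 < c' := lt_of_lt_of_le hst0 hc'ge
  refine ⟨r, ⟨hrP, hrQ⟩, s / c', le_of_lt (div_pos hs0 hc'pos), ?_, ?_⟩
  · rw [div_le_iff₀ hc'pos, one_mul]
    have hsle : s ≤ s / t := (le_div_iff₀ ht0).mpr (by nlinarith)
    exact hsle.trans hc'ge
  · rw [hrc, smul_smul, div_mul_cancel₀ _ hc'pos.ne', hxp]

lemma hull0_inter {P Q : Set (Fin n → ℝ)} (hP : IsPolytope P) (hQ : IsPolytope Q)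
    (hU : IsPolytope (P ∪ Q)) (hI : IsPolytope (P ∩ Q)) :
    convexHull ℝ ((P ∩ Q) ∪ {0}) = convexHull ℝ (P ∪ {0}) ∩ convexHull ℝ (Q ∪ {0}) := by
  apply subset_antisymm
  · apply Set.subset_inter
    · exact convexHull_mono (Set.union_subset_union_left _ Set.inter_subset_left)
    · exact convexHull_mono (Set.union_subset_union_left _ Set.inter_subset_right)
  · intro x hx
    rw [hull0_eq (poly_convex hP) (poly_nonempty hP)] at hx
    rw [hull0_eq (poly_convex hQ) (poly_nonempty hQ)] at hx
    obtain ⟨hx1, hx2⟩ := hx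
    simp only [Set.mem_iUnion, exists_prop] at hx1 hx2
    obtain ⟨p, hp, hxp⟩ := hx1
    obtain ⟨q, hq, hxq⟩ := hx2
    rw [mem_seg0] at hxp hxq
    obtain ⟨s, hs0, hs1, hxs⟩ := hxp
    obtain ⟨t, ht0, ht1, hxt⟩ := hxq
    rw [hull0_eq (poly_convex hI) (poly_nonempty hI)]
    simp only [Set.mem_iUnion, mem_seg0]
    rcases le_total s t with hst | hst
    · obtain ⟨r, hr, c, hc0, hc1, hxc⟩ :=
        key hP hQ hU (poly_nonempty hI) hp hq hs0 ht1 hst hxs hxt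
      exact ⟨r, hr, c, hc0, hc1, hxc⟩
    · obtain ⟨r, hr, c, hc0, hc1, hxc⟩ :=
        key hQ hP (by rwa [Set.union_comm]) (by rw [Set.inter_comm]; exact poly_nonempty hI)
          hq hp ht0 hs1 hst hxt hxs
      exact ⟨r, ⟨hr.2, hr.1⟩, c, hc0, hc1, hxc⟩

end ValAux

/-- If `Z` is a valuation on convex polytopes with values in an abelian group, then
`P ↦ Z [P, o]` is also a valuation on convex polytopes. -/
theorem valuation_conv_origin {n : ℕ} {A : Type*} [AddCommGroup A]
    (Z : Set (Fin n → ℝ) → A)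
    (hval : ∀ P Q : Set (Fin n → ℝ), IsPolytope P → IsPolytope Q →
      IsPolytope (P ∪ Q) → IsPolytope (P ∩ Q) →
      Z P + Z Q = Z (P ∪ Q) + Z (P ∩ Q)) :
    ∀ P Q : Set (Fin n → ℝ), IsPolytope P → IsPolytope Q →
      IsPolytope (P ∪ Q) → IsPolytope (P ∩ Q) →
      Z (convexHull ℝ (P ∪ {0})) + Z (convexHull ℝ (Q ∪ {0}))
        = Z (convexHull ℝ ((P ∪ Q) ∪ {0})) + Z (convexHull ℝ ((P ∩ Q) ∪ {0})) := by
  intro P Q hP hQ hU hI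
  rw [ValAux.hull0_union hP hQ hU, ValAux.hull0_inter hP hQ hU hI]
  exact hval _ _ (ValAux.poly_hull0 hP) (ValAux.poly_hull0 hQ)
    (by rw [← ValAux.hull0_union hP hQ hU]; exact ValAux.poly_hull0 hU)
    (by rw [← ValAux.hull0_inter hP hQ hU hI]; exact ValAux.poly_hull0 hI)
end

section
/- Let n ≥ 2, 0 < λ < 1, and Tⁿ = [o, e₁, ..., e_n] the standard n-simplex. Define φ₃ ∈ SL(n) by φ₃e₁ = λ^{-1/n}(λe₁ + (1-λ)e₂), φ₃e_i = λ^{-1/n}e_i for i ≥ 2, and φ₄ ∈ SL(n) by φ₄e₂ = (1-λ)^{-1/n}(λe₁ + (1-λ)e₂), φ₄e_i = (1-λ)^{-1/n}e_i for i ≠ 2. Then for every s > 0: sTⁿ ∩ H_λ⁻ = φ₃(λ^{1/n}sTⁿ), sTⁿ ∩ H_λ⁺ = φ₄((1-λ)^{1/n}sTⁿ), and sTⁿ ∩ H_λ = φ₃(λ^{1/n}sT̂^{n-1}), where H_λ is the hyperplane {x : x·((1-λ)e₁ - λe₂) = 0} with corresponding halfspaces, and T̂^{n-1} = [o, e₁,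 e₃, ..., e_n]. -/
open Pointwise

/-- The standard simplex `T^d = [o, e₁, …, e_d]` in `ℝⁿ` (indices `0,…,d-1` stand for
`e₁,…,e_d`). -/
def stdSimplex' (n d : ℕ) : Set (Fin n → ℝ) :=
  convexHull ℝ ({0} ∪ {x | ∃ i : Fin n, (i : ℕ) < d ∧ x = (Pi.single i 1 : Fin n → ℝ)})

/-- The simplex `T̂^{d-1} = [o, e₁, e₃, …, e_d]` (omitting `e₂`). -/
def stdSimplexHat (n d : ℕ) : Set (Fin n → ℝ) :=
  convexHull ℝ
    ({0} ∪ {x | ∃ i : Fin n, (i : ℕ) < d ∧ (i : ℕ) ≠ 1 ∧ x = (Pi.single i 1 : Fin n → ℝ)})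

lemma mem_hull_zero_union_range {V : Type*} [AddCommGroup V] [Module ℝ V]
    {I : Type*} [Fintype I] [DecidableEq I] (v : I → V) (x : V) :
    x ∈ convexHull ℝ ({0} ∪ Set.range v) ↔
      ∃ w : I → ℝ, (∀ i, 0 ≤ w i) ∧ ∑ i, w i ≤ 1 ∧ x = ∑ i, w i • v i := by
  constructor
  · intro hx
    have hsub : ({0} ∪ Set.range v : Set V) ⊆
        {x | ∃ w : I → ℝ, (∀ i, 0 ≤ w i) ∧ ∑ i, w i ≤ 1 ∧ x = ∑ i, w i • v i} := by
      rintro y (rfl | ⟨i, rfl⟩)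
      · exact ⟨0, fun i => le_rfl, by simp, by simp⟩
      · refine ⟨fun j => if j = i then 1 else 0, fun j => by positivity, by simp, ?_⟩
        simp [ite_smul]
    have hconv : Convex ℝ
        {x : V | ∃ w : I → ℝ, (∀ i, 0 ≤ w i) ∧ ∑ i, w i ≤ 1 ∧ x = ∑ i, w i • v i} := by
      rintro x ⟨w, hw, hws, rfl⟩ y ⟨u, hu, hus, rfl⟩ a b ha hb hab
      refine ⟨fun i => a * w i + b * u i,
        fun i => add_nonneg (mul_nonneg ha (hw i)) (mul_nonneg hb (hu i)), ?_, ?_⟩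
      · calc ∑ i, (a * w i + b * u i) = a * ∑ i, w i + b * ∑ i, u i := by
              rw [Finset.sum_add_distrib, Finset.mul_sum, Finset.mul_sum]
          _ ≤ a * 1 + b * 1 := by gcongr
          _ = 1 := by linarith
      · rw [Finset.smul_sum, Finset.smul_sum, ← Finset.sum_add_distrib]
        exact Finset.sum_congr rfl fun i _ => by rw [add_smul, smul_smul, smul_smul]
    exact convexHull_min hsub hconv hx
  · rintro ⟨w, hw, hws, rfl⟩
    have h := Convex.sum_mem (convex_convexHull ℝ ({0} ∪ Set.range v))
      (t := (Finset.univ : Finset (Option I)))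
      (w := fun o => Option.elim o (1 - ∑ i, w i) w)
      (z := fun o => Option.elim o 0 v)
      (fun o _ => by cases o with
        | none => simpa using hws
        | some i => exact hw i)
      (by simp [Fintype.sum_option])
      (fun o _ => by cases o with
        | none => exact subset_convexHull ℝ _ (Or.inl rfl)
        | some i => exact subset_convexHull ℝ _ (Or.inr ⟨i, rfl⟩))
    simpa [Fintype.sum_option] using h

lemma single_eq_smul_single {n : ℕ} (k : Fin n) (a : ℝ) :
    (Pi.single k a : Fin n → ℝ) = a • (Pi.single k 1 : Fin n → ℝ) := by
  funext j
  by_cases h : j = k <;> simp [Pi.single_apply, h]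

lemma sum_smul_single {n : ℕ} (w : Fin n → ℝ) :
    ∑ i, w i • (Pi.single i 1 : Fin n → ℝ) = w := by
  have h : ∀ i : Fin n, w i • (Pi.single i 1 : Fin n → ℝ) = Pi.single i (w i) :=
    fun i => (single_eq_smul_single i (w i)).symm
  simp_rw [h, Finset.univ_sum_single]

lemma mem_stdSimplex'_iff {n : ℕ} (x : Fin n → ℝ) :
    x ∈ stdSimplex' n n ↔ (∀ i, 0 ≤ x i) ∧ ∑ i, x i ≤ 1 := by
  have hset : ({x : Fin n → ℝ | ∃ i : Fin n, (i : ℕ) < n ∧ x = Pi.single i 1})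
      = Set.range (fun i : Fin n => (Pi.single i 1 : Fin n → ℝ)) := by
    ext y; simp only [Set.mem_setOf_eq, Set.mem_range]
    exact ⟨fun ⟨i, _, h⟩ => ⟨i, h.symm⟩, fun ⟨i, h⟩ => ⟨i, i.isLt, h.symm⟩⟩
  rw [stdSimplex', hset, mem_hull_zero_union_range]
  constructor
  · rintro ⟨w, hw, hws, rfl⟩
    rw [sum_smul_single]
    exact ⟨hw, hws⟩
  · rintro ⟨h1, h2⟩
    exact ⟨x, h1, h2, (sum_smul_single x).symm⟩

lemma hat_key {n : ℕ} (w : {i : Fin n // (i : ℕ) ≠ 1} → ℝ) :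
    ∑ i, w i • (Pi.single i.1 1 : Fin n → ℝ)
      = fun j : Fin n => if h : (j : ℕ) = 1 then 0 else w ⟨j, h⟩ := by
  funext j
  rw [Finset.sum_apply]
  by_cases hj : (j : ℕ) = 1
  · rw [dif_pos hj]
    apply Finset.sum_eq_zero
    intro i _
    have hji : j ≠ i.1 := fun h => i.2 (by rw [← h]; exact hj)
    simp [Pi.single_apply, hji]
  · rw [dif_neg hj]
    rw [Finset.sum_eq_single (⟨j, hj⟩ : {i : Fin n // (i : ℕ) ≠ 1})]
    · simp [Pi.single_apply]
    · intro b _ hb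
      have hjb : j ≠ b.1 := fun h => hb (Subtype.ext h.symm)
      simp [Pi.single_apply, hjb]
    · intro h; exact absurd (Finset.mem_univ _) h

lemma hat_sum {n : ℕ} (w : {i : Fin n // (i : ℕ) ≠ 1} → ℝ) :
    ∑ j, (∑ i, w i • (Pi.single i.1 1 : Fin n → ℝ)) j = ∑ i, w i := by
  simp only [Finset.sum_apply, Pi.smul_apply, smul_eq_mul]
  rw [Finset.sum_comm]
  exact Finset.sum_congr rfl fun i _ => by
    rw [← Finset.mul_sum, Fintype.sum_pi_single', mul_one]

lemma mem_stdSimplexHat_iff {n : ℕ} (hn : 1 < n) (x : Fin n → ℝ) :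
    x ∈ stdSimplexHat n n ↔ (∀ i, 0 ≤ x i) ∧ x ⟨1, hn⟩ = 0 ∧ ∑ i, x i ≤ 1 := by
  have hset : {x : Fin n → ℝ | ∃ i : Fin n, (i : ℕ) < n ∧ (i : ℕ) ≠ 1 ∧ x = Pi.single i 1}
      = Set.range (fun i : {i : Fin n // (i : ℕ) ≠ 1} => (Pi.single i.1 1 : Fin n → ℝ)) := by
    ext y; constructor
    · rintro ⟨i, _, hi, rfl⟩; exact ⟨⟨i, hi⟩, rfl⟩
    · rintro ⟨i, rfl⟩; exact ⟨i.1, i.1.isLt, i.2, rfl⟩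
  rw [stdSimplexHat, hset, mem_hull_zero_union_range]
  constructor
  · rintro ⟨w, hw, hws, rfl⟩
    refine ⟨fun i => ?_, ?_, ?_⟩
    · rw [hat_key w]
      by_cases h : (i : ℕ) = 1 <;> simp [h, hw]
    · rw [hat_key w]; simp
    · rw [hat_sum w]; exact hws
  · rintro ⟨h0, h1, hs⟩
    have hx : ∑ i, (fun i : {i : Fin n // (i : ℕ) ≠ 1} => x i.1) i •
        (Pi.single i.1 1 : Fin n → ℝ) = x := by
      rw [hat_key]
      funext j
      by_cases h : (j : ℕ) = 1
      · rw [dif_pos h]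
        have hj : j = ⟨1, hn⟩ := Fin.ext h
        rw [hj]; exact h1.symm
      · rw [dif_neg h]
    refine ⟨fun i => x i.1, fun i => h0 i.1, ?_, hx.symm⟩
    calc ∑ i : {i : Fin n // (i : ℕ) ≠ 1}, x i.1
        = ∑ j, x j := by rw [← hat_sum (fun i => x i.1), hx]
      _ ≤ 1 := hs

lemma mem_smul_simplex {n : ℕ} {r : ℝ} (hr : 0 < r) (x : Fin n → ℝ) :
    x ∈ r • stdSimplex' n n ↔ (∀ i, 0 ≤ x i) ∧ ∑ i, x i ≤ r := by
  rw [Set.mem_smul_set_iff_inv_smul_mem₀ hr.ne', mem_stdSimplex'_iff]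
  simp only [Pi.smul_apply, smul_eq_mul, ← Finset.mul_sum]
  constructor
  · rintro ⟨h1, h2⟩
    refine ⟨fun i => ?_, ?_⟩
    · have h := h1 i
      have h' : 0 ≤ r * (r⁻¹ * x i) := mul_nonneg hr.le h
      rwa [← mul_assoc, mul_inv_cancel₀ hr.ne', one_mul] at h'
    · have h' : r * (r⁻¹ * ∑ i, x i) ≤ r * 1 := mul_le_mul_of_nonneg_left h2 hr.le
      rwa [← mul_assoc, mul_inv_cancel₀ hr.ne', one_mul, mul_one] at h'
  · rintro ⟨h1, h2⟩
    refine ⟨fun i => mul_nonneg (by positivity) (h1 i), ?_⟩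
    rw [inv_mul_le_iff₀ hr, mul_one]; exact h2

lemma mem_smul_hat {n : ℕ} (hn : 1 < n) {r : ℝ} (hr : 0 < r) (x : Fin n → ℝ) :
    x ∈ r • stdSimplexHat n n ↔
      (∀ i, 0 ≤ x i) ∧ x ⟨1, hn⟩ = 0 ∧ ∑ i, x i ≤ r := by
  rw [Set.mem_smul_set_iff_inv_smul_mem₀ hr.ne', mem_stdSimplexHat_iff hn]
  simp only [Pi.smul_apply, smul_eq_mul, ← Finset.mul_sum]
  constructor
  · rintro ⟨h1, h2, h3⟩
    refine ⟨fun i => ?_, ?_, ?_⟩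
    · have h := h1 i
      have h' : 0 ≤ r * (r⁻¹ * x i) := mul_nonneg hr.le h
      rwa [← mul_assoc, mul_inv_cancel₀ hr.ne', one_mul] at h'
    · rcases mul_eq_zero.mp h2 with h | h
      · exact absurd h (inv_ne_zero hr.ne')
      · exact h
    · have h' : r * (r⁻¹ * ∑ i, x i) ≤ r * 1 := mul_le_mul_of_nonneg_left h3 hr.le
      rwa [← mul_assoc, mul_inv_cancel₀ hr.ne', one_mul, mul_one] at h'
  · rintro ⟨h1, h2, h3⟩
    refine ⟨fun i => mul_nonneg (by positivity) (h1 i), by rw [h2, mul_zero], ?_⟩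
    rw [inv_mul_le_iff₀ hr, mul_one]; exact h3

/-- The shear-and-scale map used for both `φ₃` and `φ₄`. -/
def psiMap {n : ℕ} (c a : ℝ) (k l : Fin n) : (Fin n → ℝ) →ₗ[ℝ] (Fin n → ℝ) where
  toFun y := c • (y + Pi.single l (a * y k) - Pi.single k (a * y k))
  map_add' y z := by
    funext j
    simp only [Pi.smul_apply, Pi.add_apply, Pi.sub_apply, Pi.single_apply, smul_eq_mul]
    split_ifs <;> ring
  map_smul' r y := by
    funext j
    simp only [Pi.smul_apply, Pi.add_apply, Pi.sub_apply, Pi.single_apply, smul_eq_mul,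
      RingHom.id_apply]
    split_ifs <;> ring

lemma psiMap_def {n : ℕ} (c a : ℝ) (k l : Fin n) (y : Fin n → ℝ) :
    psiMap c a k l y = c • (y + Pi.single l (a * y k) - Pi.single k (a * y k)) := rfl

lemma psiMap_apply {n : ℕ} {c a : ℝ} {k l : Fin n} (hkl : k ≠ l) (y : Fin n → ℝ) (j : Fin n) :
    psiMap c a k l y j =
      if j = k then c * (y k - a * y k) else if j = l then c * (y j + a * y k) else c * y j := by
  simp only [psiMap_def, Pi.smul_apply, Pi.add_apply, Pi.sub_apply, Pi.single_apply, smul_eq_mul]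
  split_ifs <;> simp_all <;> ring

lemma psiMap_sum {n : ℕ} (c a : ℝ) (k l : Fin n) (y : Fin n → ℝ) :
    ∑ j, psiMap c a k l y j = c * ∑ j, y j := by
  simp only [psiMap_def, Pi.smul_apply, Pi.add_apply, Pi.sub_apply, smul_eq_mul]
  rw [← Finset.mul_sum, Finset.sum_sub_distrib, Finset.sum_add_distrib,
    Fintype.sum_pi_single', Fintype.sum_pi_single']
  ring

lemma phi_eq_psi {n : ℕ} (φ : (Fin n → ℝ) →ₗ[ℝ] (Fin n → ℝ)) (c a : ℝ) (k l : Fin n)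
    (hkl : k ≠ l)
    (hk : φ (Pi.single k 1) =
      c • ((1 - a) • (Pi.single k 1 : Fin n → ℝ) + a • (Pi.single l 1 : Fin n → ℝ)))
    (hi : ∀ i, i ≠ k → φ (Pi.single i 1) = c • (Pi.single i 1 : Fin n → ℝ)) :
    φ = psiMap c a k l := by
  apply LinearMap.pi_ext
  intro i x
  rw [show (Pi.single i x : Fin n → ℝ) = x • (Pi.single i 1 : Fin n → ℝ) from
    single_eq_smul_single i x, map_smul, map_smul]
  congr 1
  by_cases h : i = k
  · subst h
    rw [hk, psiMap_def]
    rw [Pi.single_eq_same, mul_one, single_eq_smul_single l a, single_eq_smul_single i a]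
    module
  · rw [hi i h, psiMap_def]
    rw [Pi.single_eq_of_ne' h, mul_zero, Pi.single_zero, Pi.single_zero]
    simp

lemma eval_add_single {n : ℕ} (r p : ℝ) {k l : Fin n} (hkl : k ≠ l) (x : Fin n → ℝ)
    (j : Fin n) :
    (r • (x + Pi.single k p - Pi.single l p) : Fin n → ℝ) j =
      if j = k then r * (x j + p) else if j = l then r * (x j - p) else r * x j := by
  simp only [Pi.smul_apply, Pi.add_apply, Pi.sub_apply, Pi.single_apply, smul_eq_mul]
  split_ifs <;> simp_all <;> ring

lemma sum_add_single {n : ℕ} (r p : ℝ) (k l : Fin n) (x : Fin n → ℝ) :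
    ∑ j, (r • (x + Pi.single k p - Pi.single l p) : Fin n → ℝ) j = r * ∑ j, x j := by
  simp only [Pi.smul_apply, Pi.add_apply, Pi.sub_apply, smul_eq_mul]
  rw [← Finset.mul_sum, Finset.sum_sub_distrib, Finset.sum_add_distrib,
    Fintype.sum_pi_single', Fintype.sum_pi_single']
  ring

set_option maxHeartbeats 1000000 in
/-- The dissection of `sTⁿ` by the hyperplane `H_λ`: with `φ₃, φ₄ ∈ SL(n)` as stated,
`sTⁿ ∩ H_λ⁻ = φ₃(λ^{1/n}sTⁿ)`, `sTⁿ ∩ H_λ⁺ = φ₄((1-λ)^{1/n}sTⁿ)` and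
`sTⁿ ∩ H_λ = φ₃(λ^{1/n}s T̂^{n-1})`. -/
theorem simplex_dissection_top {n : ℕ} (hn : 2 ≤ n)
    (lam : ℝ) (hlam : 0 < lam) (hlam1 : lam < 1) (s : ℝ) (hs : 0 < s)
    (φ₃ φ₄ : (Fin n → ℝ) →ₗ[ℝ] (Fin n → ℝ))
    (hφ₃₁ : φ₃ (Pi.single (⟨0, by omega⟩ : Fin n) 1 : Fin n → ℝ)
      = lam ^ (-(1 : ℝ) / n) •
          (lam • (Pi.single (⟨0, by omega⟩ : Fin n) 1 : Fin n → ℝ)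
            + (1 - lam) • (Pi.single (⟨1, by omega⟩ : Fin n) 1 : Fin n → ℝ)))
    (hφ₃i : ∀ i : Fin n, 1 ≤ (i : ℕ) →
      φ₃ (Pi.single i 1 : Fin n → ℝ) = lam ^ (-(1 : ℝ) / n) • (Pi.single i 1 : Fin n → ℝ))
    (hφ₄₂ : φ₄ (Pi.single (⟨1, by omega⟩ : Fin n) 1 : Fin n → ℝ)
      = (1 - lam) ^ (-(1 : ℝ) / n) •
          (lam • (Pi.single (⟨0, by omega⟩ : Fin n) 1 : Fin n → ℝ)
            + (1 - lam) • (Pi.single (⟨1, by omega⟩ : Fin n) 1 : Fin n → ℝ)))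
    (hφ₄i : ∀ i : Fin n, (i : ℕ) ≠ 1 →
      φ₄ (Pi.single i 1 : Fin n → ℝ)
        = (1 - lam) ^ (-(1 : ℝ) / n) • (Pi.single i 1 : Fin n → ℝ)) :
    ((s • stdSimplex' n n : Set (Fin n → ℝ)) ∩
        {x | (1 - lam) * x ⟨0, by omega⟩ - lam * x ⟨1, by omega⟩ ≤ 0})
      = φ₃ '' ((lam ^ ((1 : ℝ) / n) * s) • stdSimplex' n n : Set (Fin n → ℝ)) ∧
    ((s • stdSimplex' n n : Set (Fin n → ℝ)) ∩
        {x | 0 ≤ (1 - lam) * x ⟨0, by omega⟩ - lam * x ⟨1, by omega⟩})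
      = φ₄ '' (((1 - lam) ^ ((1 : ℝ) / n) * s) • stdSimplex' n n : Set (Fin n → ℝ)) ∧
    ((s • stdSimplex' n n : Set (Fin n → ℝ)) ∩
        {x | (1 - lam) * x ⟨0, by omega⟩ - lam * x ⟨1, by omega⟩ = 0})
      = φ₃ '' ((lam ^ ((1 : ℝ) / n) * s) • stdSimplexHat n n : Set (Fin n → ℝ)) := by
  have h1l : 0 < 1 - lam := by linarith
  have h1n : 1 < n := by omega
  set i0 : Fin n := ⟨0, by omega⟩ with hi0def
  set i1 : Fin n := ⟨1, by omega⟩ with hi1def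
  have hne : i0 ≠ i1 := by
    intro h
    have := congrArg (fun t : Fin n => (t : ℕ)) h
    simp [hi0def, hi1def] at this
  -- constants
  have hc3 : 0 < lam ^ (-(1 : ℝ) / n) := Real.rpow_pos_of_pos hlam _
  have hc3' : 0 < lam ^ ((1 : ℝ) / n) := Real.rpow_pos_of_pos hlam _
  have hc4 : 0 < (1 - lam) ^ (-(1 : ℝ) / n) := Real.rpow_pos_of_pos h1l _
  have hc4' : 0 < (1 - lam) ^ ((1 : ℝ) / n) := Real.rpow_pos_of_pos h1l _
  have hexp : (-(1 : ℝ) / n) + (1 : ℝ) / n = 0 := by ring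
  have hmul3 : lam ^ (-(1 : ℝ) / n) * lam ^ ((1 : ℝ) / n) = 1 := by
    rw [← Real.rpow_add hlam, hexp, Real.rpow_zero]
  have hmul4 : (1 - lam) ^ (-(1 : ℝ) / n) * (1 - lam) ^ ((1 : ℝ) / n) = 1 := by
    rw [← Real.rpow_add h1l, hexp, Real.rpow_zero]
  have hinv3 : (lam ^ (-(1 : ℝ) / n))⁻¹ = lam ^ ((1 : ℝ) / n) :=
    inv_eq_of_mul_eq_one_right hmul3
  have hinv4 : ((1 - lam) ^ (-(1 : ℝ) / n))⁻¹ = (1 - lam) ^ ((1 : ℝ) / n) :=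
    inv_eq_of_mul_eq_one_right hmul4
  set c3 : ℝ := lam ^ (-(1 : ℝ) / n)
  set c3' : ℝ := lam ^ ((1 : ℝ) / n)
  set c4 : ℝ := (1 - lam) ^ (-(1 : ℝ) / n)
  set c4' : ℝ := (1 - lam) ^ ((1 : ℝ) / n)
  -- identification of the maps
  have hψ3 : φ₃ = psiMap c3 (1 - lam) i0 i1 := by
    refine phi_eq_psi φ₃ c3 (1 - lam) i0 i1 hne ?_ ?_
    · rw [hφ₃₁]
      congr 1
      module
    · intro i h
      refine hφ₃i i ?_
      have h0 : (i : ℕ) ≠ 0 := fun h0 => h (Fin.ext h0)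
      omega
  have hψ4 : φ₄ = psiMap c4 lam i1 i0 := by
    refine phi_eq_psi φ₄ c4 lam i1 i0 hne.symm ?_ ?_
    · rw [hφ₄₂]
      congr 1
      module
    · intro i h
      refine hφ₄i i ?_
      exact fun h1 => h (Fin.ext h1)
  have hinv3' : (0 : ℝ) ≤ c3⁻¹ := inv_nonneg.mpr hc3.le
  have hinv4' : (0 : ℝ) ≤ c4⁻¹ := inv_nonneg.mpr hc4.le
  have hpsik3 : ∀ y : Fin n → ℝ, psiMap c3 (1 - lam) i0 i1 y i0
      = c3 * (y i0 - (1 - lam) * y i0) := fun y => by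
    rw [psiMap_apply hne]; simp
  have hpsil3 : ∀ y : Fin n → ℝ, psiMap c3 (1 - lam) i0 i1 y i1
      = c3 * (y i1 + (1 - lam) * y i0) := fun y => by
    rw [psiMap_apply hne]; simp [Ne.symm hne]
  have hpsik4 : ∀ y : Fin n → ℝ, psiMap c4 lam i1 i0 y i1
      = c4 * (y i1 - lam * y i1) := fun y => by
    rw [psiMap_apply (Ne.symm hne)]; simp
  have hpsil4 : ∀ y : Fin n → ℝ, psiMap c4 lam i1 i0 y i0
      = c4 * (y i0 + lam * y i1) := fun y => by
    rw [psiMap_apply (Ne.symm hne)]; simp [hne]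
  refine ⟨?_, ?_, ?_⟩
  -- Part 1
  · ext x
    simp only [Set.mem_inter_iff, Set.mem_setOf_eq, Set.mem_image]
    rw [mem_smul_simplex hs]
    constructor
    · rintro ⟨⟨hpos, hsum⟩, hhs⟩
      set p : ℝ := (1 - lam) * x i0 / lam with hp
      have hp0 : 0 ≤ p := div_nonneg (mul_nonneg h1l.le (hpos i0)) hlam.le
      have hyk : (c3⁻¹ • (x + Pi.single i0 p - Pi.single i1 p) : Fin n → ℝ) i0
          = c3⁻¹ * (x i0 + p) := by rw [eval_add_single _ _ hne]; simp
      have hyl : (c3⁻¹ • (x + Pi.single i0 p - Pi.single i1 p) : Fin n → ℝ) i1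
          = c3⁻¹ * (x i1 - p) := by rw [eval_add_single _ _ hne]; simp [Ne.symm hne]
      refine ⟨c3⁻¹ • (x + Pi.single i0 p - Pi.single i1 p), ?_, ?_⟩
      · rw [mem_smul_simplex (mul_pos hc3' hs)]
        constructor
        · intro j
          rw [eval_add_single _ _ hne]
          split_ifs with h0 h1
          · exact mul_nonneg hinv3' (by linarith [hpos j])
          · subst h1
            have hle : p ≤ x i1 := by
              rw [hp, div_le_iff₀ hlam]
              nlinarith [hhs]
            exact mul_nonneg hinv3' (by linarith)
          · exact mul_nonneg hinv3' (hpos j)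
        · rw [sum_add_single, hinv3]
          exact mul_le_mul_of_nonneg_left hsum hc3'.le
      · rw [hψ3]
        funext j
        rw [psiMap_apply hne]
        split_ifs with h0 h1
        · subst h0
          rw [hyk, hp]
          field_simp
          ring
        · subst h1
          rw [hyl, hyk, hp]
          field_simp
          ring
        · rw [eval_add_single _ _ hne, if_neg h0, if_neg h1, ← mul_assoc,
            mul_inv_cancel₀ hc3.ne', one_mul]
    · rintro ⟨y, hy, rfl⟩
      rw [mem_smul_simplex (mul_pos hc3' hs)] at hy
      obtain ⟨hpos, hsum⟩ := hy
      rw [hψ3]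
      refine ⟨⟨fun j => ?_, ?_⟩, ?_⟩
      · rw [psiMap_apply hne]
        split_ifs with h0 h1
        · nlinarith [mul_nonneg hc3.le (mul_nonneg hlam.le (hpos i0))]
        · exact mul_nonneg hc3.le
            (add_nonneg (hpos j) (mul_nonneg h1l.le (hpos i0)))
        · exact mul_nonneg hc3.le (hpos j)
      · rw [psiMap_sum]
        calc c3 * ∑ j, y j ≤ c3 * (c3' * s) := mul_le_mul_of_nonneg_left hsum hc3.le
          _ = s := by rw [← mul_assoc, hmul3, one_mul]
      · rw [hpsik3, hpsil3]
        nlinarith [mul_nonneg hc3.le (mul_nonneg hlam.le (hpos i1))]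
  -- Part 2
  · ext x
    simp only [Set.mem_inter_iff, Set.mem_setOf_eq, Set.mem_image]
    rw [mem_smul_simplex hs]
    constructor
    · rintro ⟨⟨hpos, hsum⟩, hhs⟩
      set p : ℝ := lam * x i1 / (1 - lam) with hp
      have hp0 : 0 ≤ p := div_nonneg (mul_nonneg hlam.le (hpos i1)) h1l.le
      have hyk : (c4⁻¹ • (x + Pi.single i1 p - Pi.single i0 p) : Fin n → ℝ) i1
          = c4⁻¹ * (x i1 + p) := by rw [eval_add_single _ _ (Ne.symm hne)]; simp
      have hyl : (c4⁻¹ • (x + Pi.single i1 p - Pi.single i0 p) : Fin n → ℝ) i0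
          = c4⁻¹ * (x i0 - p) := by rw [eval_add_single _ _ (Ne.symm hne)]; simp [hne]
      refine ⟨c4⁻¹ • (x + Pi.single i1 p - Pi.single i0 p), ?_, ?_⟩
      · rw [mem_smul_simplex (mul_pos hc4' hs)]
        constructor
        · intro j
          rw [eval_add_single _ _ (Ne.symm hne)]
          split_ifs with h0 h1
          · exact mul_nonneg hinv4' (by linarith [hpos j])
          · subst h1
            have hle : p ≤ x i0 := by
              rw [hp, div_le_iff₀ h1l]
              nlinarith [hhs]
            exact mul_nonneg hinv4' (by linarith)
          · exact mul_nonneg hinv4' (hpos j)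
        · rw [sum_add_single, hinv4]
          exact mul_le_mul_of_nonneg_left hsum hc4'.le
      · rw [hψ4]
        funext j
        rw [psiMap_apply (Ne.symm hne)]
        split_ifs with h0 h1
        · subst h0
          rw [hyk, hp]
          field_simp
          ring
        · subst h1
          rw [hyl, hyk, hp]
          field_simp
          ring
        · rw [eval_add_single _ _ (Ne.symm hne), if_neg h0, if_neg h1, ← mul_assoc,
            mul_inv_cancel₀ hc4.ne', one_mul]
    · rintro ⟨y, hy, rfl⟩
      rw [mem_smul_simplex (mul_pos hc4' hs)] at hy
      obtain ⟨hpos, hsum⟩ := hy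
      rw [hψ4]
      refine ⟨⟨fun j => ?_, ?_⟩, ?_⟩
      · rw [psiMap_apply (Ne.symm hne)]
        split_ifs with h0 h1
        · nlinarith [mul_nonneg hc4.le (mul_nonneg h1l.le (hpos i1))]
        · exact mul_nonneg hc4.le
            (add_nonneg (hpos j) (mul_nonneg hlam.le (hpos i1)))
        · exact mul_nonneg hc4.le (hpos j)
      · rw [psiMap_sum]
        calc c4 * ∑ j, y j ≤ c4 * (c4' * s) := mul_le_mul_of_nonneg_left hsum hc4.le
          _ = s := by rw [← mul_assoc, hmul4, one_mul]
      · rw [hpsik4, hpsil4]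
        nlinarith [mul_nonneg hc4.le (mul_nonneg h1l.le (hpos i0))]
  -- Part 3
  · ext x
    simp only [Set.mem_inter_iff, Set.mem_setOf_eq, Set.mem_image]
    rw [mem_smul_simplex hs]
    constructor
    · rintro ⟨⟨hpos, hsum⟩, hhs⟩
      set p : ℝ := (1 - lam) * x i0 / lam with hp
      have hp0 : 0 ≤ p := div_nonneg (mul_nonneg h1l.le (hpos i0)) hlam.le
      have hpx : p = x i1 := by
        rw [hp, div_eq_iff hlam.ne']
        linarith [hhs]
      have hyk : (c3⁻¹ • (x + Pi.single i0 p - Pi.single i1 p) : Fin n → ℝ) i0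
          = c3⁻¹ * (x i0 + p) := by rw [eval_add_single _ _ hne]; simp
      have hyl : (c3⁻¹ • (x + Pi.single i0 p - Pi.single i1 p) : Fin n → ℝ) i1
          = c3⁻¹ * (x i1 - p) := by rw [eval_add_single _ _ hne]; simp [Ne.symm hne]
      refine ⟨c3⁻¹ • (x + Pi.single i0 p - Pi.single i1 p), ?_, ?_⟩
      · rw [mem_smul_hat h1n (mul_pos hc3' hs)]
        refine ⟨fun j => ?_, ?_, ?_⟩
        · rw [eval_add_single _ _ hne]
          split_ifs with h0 h1
          · exact mul_nonneg hinv3' (by linarith [hpos j])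
          · subst h1
            exact mul_nonneg hinv3' (by rw [hpx]; linarith)
          · exact mul_nonneg hinv3' (hpos j)
        · have h1 : (⟨1, h1n⟩ : Fin n) = i1 := rfl
          rw [h1, hyl, hpx]
          ring
        · rw [sum_add_single, hinv3]
          exact mul_le_mul_of_nonneg_left hsum hc3'.le
      · rw [hψ3]
        funext j
        rw [psiMap_apply hne]
        split_ifs with h0 h1
        · subst h0
          rw [hyk, hp]
          field_simp
          ring
        · subst h1
          rw [hyl, hyk, hp]
          field_simp
          ring
        · rw [eval_add_single _ _ hne, if_neg h0, if_neg h1, ← mul_assoc,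
            mul_inv_cancel₀ hc3.ne', one_mul]
    · rintro ⟨y, hy, rfl⟩
      rw [mem_smul_hat h1n (mul_pos hc3' hs)] at hy
      obtain ⟨hpos, hy1, hsum⟩ := hy
      have hy1' : y i1 = 0 := hy1
      rw [hψ3]
      refine ⟨⟨fun j => ?_, ?_⟩, ?_⟩
      · rw [psiMap_apply hne]
        split_ifs with h0 h1
        · nlinarith [mul_nonneg hc3.le (mul_nonneg hlam.le (hpos i0))]
        · exact mul_nonneg hc3.le
            (add_nonneg (hpos j) (mul_nonneg h1l.le (hpos i0)))
        · exact mul_nonneg hc3.le (hpos j)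
      · rw [psiMap_sum]
        calc c3 * ∑ j, y j ≤ c3 * (c3' * s) := mul_le_mul_of_nonneg_left hsum hc3.le
          _ = s := by rw [← mul_assoc, hmul3, one_mul]
      · rw [hpsik3, hpsil3, hy1']
        ring
end

section
/- Let n ≥ 3 and let Z : ℝⁿ-simplices-with-vertex-at-origin → C(ℝⁿ \ {o}) be SL(n) contravariant, i.e., Z(φT)(x) = Z(T)(φ⁻¹x) for all φ ∈ SL(n). If T is a simplex with one vertex at the origin, dim T ≤ n − 2, then Z(T) is constant on ℝⁿ \ {o}: Z(T)(x) = Z(T)(e_n) for all x ≠ o. -/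
open Module Submodule Matrix Filter Topology

/-- A simplex in `ℝⁿ` with one vertex at the origin (possibly lower-dimensional,
possibly `{o}`). -/
def IsOriginSimplex {n : ℕ} (T : Set (Fin n → ℝ)) : Prop :=
  ∃ S : Finset (Fin n → ℝ),
    AffineIndependent ℝ
      (Subtype.val : (insert (0 : Fin n → ℝ) (S : Set (Fin n → ℝ)) : Set (Fin n → ℝ))
        → (Fin n → ℝ)) ∧
    T = convexHull ℝ (insert (0 : Fin n → ℝ) (S : Set (Fin n → ℝ)))

/-- A functional vanishing on `U` and taking value `1` at a point outside `U`. -/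
lemma exists_functional' {n : ℕ} (U : Submodule ℝ (Fin n → ℝ)) {x : Fin n → ℝ} (hx : x ∉ U) :
    ∃ f : (Fin n → ℝ) →ₗ[ℝ] ℝ, (∀ v ∈ U, f v = 0) ∧ f x = 1 := by
  obtain ⟨f, hfx, hfU⟩ := U.exists_dual_map_eq_bot_of_notMem hx inferInstance
  refine ⟨(f x)⁻¹ • f, ?_, by simp [inv_mul_cancel₀ hfx]⟩
  intro v hv
  have h : f v ∈ U.map f := Submodule.mem_map.2 ⟨v, hv, rfl⟩
  rw [hfU, Submodule.mem_bot] at h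
  simp [h]

lemma notMem_sup_swap' {n : ℕ} {V : Submodule ℝ (Fin n → ℝ)} {x y : Fin n → ℝ}
    (hy : y ∉ V) (hx : x ∉ V ⊔ ℝ ∙ y) : y ∉ V ⊔ ℝ ∙ x := by
  intro h
  rw [Submodule.mem_sup] at h
  obtain ⟨a, ha, b, hb, hab⟩ := h
  rw [Submodule.mem_span_singleton] at hb
  obtain ⟨c, rfl⟩ := hb
  by_cases hc : c = 0
  · subst hc
    simp only [zero_smul, add_zero] at hab
    exact hy (hab ▸ ha)
  · apply hx
    have hxeq : x = c⁻¹ • (y - a) := by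
      rw [← hab]
      simp [smul_sub, smul_smul, inv_mul_cancel₀ hc]
    rw [hxeq]
    exact Submodule.smul_mem _ _ (Submodule.sub_mem _
      (Submodule.mem_sup_right (Submodule.mem_span_singleton_self y))
      (Submodule.mem_sup_left ha))

lemma exists_notMem_two' {M : Type*} [AddCommGroup M] [Module ℝ M] {p q : Submodule ℝ M}
    (hp : p ≠ ⊤) (hq : q ≠ ⊤) : ∃ z, z ∉ p ∧ z ∉ q := by
  have hap : ∃ a, a ∉ p := by
    rw [Ne, Submodule.eq_top_iff'] at hp; push_neg at hp; exact hp
  have hbq : ∃ b, b ∉ q := by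
    rw [Ne, Submodule.eq_top_iff'] at hq; push_neg at hq; exact hq
  obtain ⟨a, ha⟩ := hap
  obtain ⟨b, hb⟩ := hbq
  by_cases haq : a ∈ q
  · by_cases hbp : b ∈ p
    · refine ⟨a + b, fun h => ?_, fun h => ?_⟩
      · exact ha (by simpa using p.sub_mem h hbp)
      · exact hb (by simpa using q.sub_mem h haq)
    · exact ⟨b, hbp, hb⟩
  · exact ⟨a, ha, haq⟩

/-- The key construction: an `SL(n)` transvection fixing `V` pointwise and mapping `y` to `x`. -/
lemma exists_sl_fix' {n : ℕ} {V : Submodule ℝ (Fin n → ℝ)} {x y : Fin n → ℝ}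
    (hy : y ∉ V) (hx : x ∉ V ⊔ ℝ ∙ y) :
    ∃ φ : Matrix.SpecialLinearGroup (Fin n) ℝ,
      (∀ v ∈ V, (↑φ : Matrix (Fin n) (Fin n) ℝ).mulVec v = v) ∧
      (↑φ : Matrix (Fin n) (Fin n) ℝ).mulVec y = x := by
  have hxV : x ∉ V := fun h => hx (Submodule.mem_sup_left h)
  have hy' : y ∉ V ⊔ ℝ ∙ x := notMem_sup_swap' hy hx
  obtain ⟨f₁, hf₁0, hf₁y⟩ := exists_functional' (V ⊔ ℝ ∙ x) hy'
  obtain ⟨f₂, hf₂0, hf₂x⟩ := exists_functional' (V ⊔ ℝ ∙ y) hx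
  set η : (Fin n → ℝ) →ₗ[ℝ] ℝ := f₁ + f₂ with hη
  set c : Fin n → ℝ := fun j => η (fun k => if j = k then 1 else 0) with hc
  set u : Fin n → ℝ := x - y with hu
  have hdot : ∀ w, c ⬝ᵥ w = η w := by
    intro w
    rw [LinearMap.pi_apply_eq_sum_univ η w]
    simp only [dotProduct, smul_eq_mul]
    exact Finset.sum_congr rfl fun j _ => by rw [mul_comm]
  have hηy : η y = 1 := by
    have h2 : f₂ y = 0 := hf₂0 y (Submodule.mem_sup_right (Submodule.mem_span_singleton_self y))
    simp [hη, hf₁y, h2]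
  have hηx : η x = 1 := by
    have h1 : f₁ x = 0 := hf₁0 x (Submodule.mem_sup_right (Submodule.mem_span_singleton_self x))
    simp [hη, hf₂x, h1]
  set M : Matrix (Fin n) (Fin n) ℝ := 1 + Matrix.replicateCol Unit u * Matrix.replicateRow Unit c with hM
  have hdet : M.det = 1 := by
    rw [hM, Matrix.det_one_add_replicateCol_mul_replicateRow]
    rw [hdot]
    simp [hu, map_sub, hηx, hηy]
  have hmulvec : ∀ w, M.mulVec w = w + η w • u := by
    intro w
    funext i
    rw [hM, Matrix.add_mulVec, Matrix.one_mulVec]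
    have : ((Matrix.replicateCol Unit u * Matrix.replicateRow Unit c).mulVec w) i = η w * u i := by
      rw [← hdot]
      simp only [Matrix.mulVec, dotProduct, Matrix.mul_apply, Matrix.replicateCol_apply,
        Matrix.replicateRow_apply, Finset.univ_unique, Finset.sum_singleton, Finset.sum_mul]
      exact Finset.sum_congr rfl fun j _ => by ring
    simp [this, mul_comm]
  refine ⟨⟨M, hdet⟩, ?_, ?_⟩
  · intro v hv
    have h1 : f₁ v = 0 := hf₁0 v (Submodule.mem_sup_left hv)
    have h2 : f₂ v = 0 := hf₂0 v (Submodule.mem_sup_left hv)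
    rw [hmulvec]
    simp [hη, h1, h2]
  · rw [hmulvec, hηy, one_smul, hu]
    abel

/-- If `Z` is `SL(n)` contravariant on origin simplices with values in `C(ℝⁿ \ {o})`,
and `dim T ≤ n - 2`, then `Z T` is constant on `ℝⁿ \ {o}`: `Z T x = Z T eₙ`. -/
theorem contravariant_low_dim_constant {n : ℕ} (hn : 3 ≤ n)
    (Z : Set (Fin n → ℝ) → (Fin n → ℝ) → ℝ)
    (hcont : ∀ T : Set (Fin n → ℝ), IsOriginSimplex T →
      ContinuousOn (Z T) {x : Fin n → ℝ | x ≠ 0})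
    (hcontra : ∀ (φ : Matrix.SpecialLinearGroup (Fin n) ℝ) (T : Set (Fin n → ℝ)),
      IsOriginSimplex T → ∀ x : Fin n → ℝ, x ≠ 0 →
        Z ((fun y => (φ : Matrix (Fin n) (Fin n) ℝ).mulVec y) '' T) x
          = Z T ((↑(φ⁻¹) : Matrix (Fin n) (Fin n) ℝ).mulVec x)) :
    ∀ T : Set (Fin n → ℝ), IsOriginSimplex T →
      Module.finrank ℝ (Submodule.span ℝ T) ≤ n - 2 →
      ∀ x : Fin n → ℝ, x ≠ 0 →
        Z T x = Z T (Pi.single (⟨n - 1, by omega⟩ : Fin n) 1 : Fin n → ℝ) := by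
  intro T hT hdim x hx
  set V : Submodule ℝ (Fin n → ℝ) := Submodule.span ℝ T with hV
  have hVne : ∀ w : Fin n → ℝ, (V ⊔ ℝ ∙ w) ≠ ⊤ := by
    intro w h
    have hsub : finrank ℝ ↥(ℝ ∙ w) ≤ 1 := by
      by_cases hw : w = 0
      · subst hw
        rw [Submodule.span_zero_singleton]
        simp
      · rw [finrank_span_singleton hw]
    have h1 : finrank ℝ ↥(V ⊔ ℝ ∙ w) ≤ (n - 2) + 1 :=
      le_trans (Submodule.finrank_add_le_finrank_add_finrank _ _) (add_le_add hdim hsub)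
    rw [h, finrank_top, Module.finrank_fin_fun] at h1
    omega
  have hVtop : V ≠ ⊤ := by
    intro h
    exact hVne 0 (by rw [h]; simp)
  obtain ⟨x₀, hx₀⟩ : ∃ x₀, x₀ ∉ V := by
    rw [Ne, Submodule.eq_top_iff'] at hVtop; push_neg at hVtop; exact hVtop
  have step : ∀ a b : Fin n → ℝ, b ∉ V → a ∉ (V ⊔ ℝ ∙ b) → Z T a = Z T b := by
    intro a b hb hab
    obtain ⟨φ, hfix, hφb⟩ := exists_sl_fix' hb hab
    have haV : a ∉ V := fun h => hab (Submodule.mem_sup_left h)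
    have ha0 : a ≠ 0 := fun h => haV (h ▸ V.zero_mem)
    have himg : (fun y => (↑φ : Matrix (Fin n) (Fin n) ℝ).mulVec y) '' T = T := by
      have heq : Set.EqOn (fun y => (↑φ : Matrix (Fin n) (Fin n) ℝ).mulVec y) id T :=
        fun v hv => hfix v (Submodule.subset_span hv)
      rw [Set.image_congr heq, Set.image_id]
    have h := hcontra φ T hT a ha0
    rw [himg] at h
    have hinv : ((↑(φ⁻¹) : Matrix (Fin n) (Fin n) ℝ)).mulVec a = b := by
      have h1 : (↑(φ⁻¹) : Matrix (Fin n) (Fin n) ℝ) * (↑φ : Matrix (Fin n) (Fin n) ℝ) = 1 := by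
        rw [← Matrix.SpecialLinearGroup.coe_mul, inv_mul_cancel,
          Matrix.SpecialLinearGroup.coe_one]
      rw [← hφb, Matrix.mulVec_mulVec, h1, Matrix.one_mulVec]
    rw [hinv] at h
    exact h
  have main : ∀ a, a ∉ V → Z T a = Z T x₀ := by
    intro a ha
    obtain ⟨z, hz1, hz2⟩ := exists_notMem_two' (hVne a) (hVne x₀)
    have hzV : z ∉ V := fun h => hz1 (Submodule.mem_sup_left h)
    have h1 : Z T a = Z T z := step a z hzV (notMem_sup_swap' ha hz1)
    have h2 : Z T x₀ = Z T z := step x₀ z hzV (notMem_sup_swap' hx₀ hz2)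
    exact h1.trans h2.symm
  have const : ∀ a : Fin n → ℝ, a ≠ 0 → Z T a = Z T x₀ := by
    intro a ha
    by_cases haV : a ∈ V
    · have hopen : IsOpen {w : Fin n → ℝ | w ≠ 0} := isOpen_ne
      have hca : ContinuousAt (Z T) a := (hcont T hT).continuousAt (hopen.mem_nhds ha)
      have hne : ∀ t : ℝ, t ≠ 0 → a + t • x₀ ∉ V := by
        intro t ht h
        apply hx₀
        have h2 : t • x₀ ∈ V := by
          have := V.sub_mem h haV
          rwa [add_sub_cancel_left] at this
        have := V.smul_mem t⁻¹ h2
        rwa [smul_smul, inv_mul_cancel₀ ht, one_smul] at this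
      have h1 : Tendsto (fun t : ℝ => a + t • x₀) (𝓝[≠] (0:ℝ)) (𝓝 a) := by
        have hcontf : Continuous fun t : ℝ => a + t • x₀ := by continuity
        simpa using (hcontf.tendsto 0).mono_left nhdsWithin_le_nhds
      have h2 : Tendsto (fun t : ℝ => Z T (a + t • x₀)) (𝓝[≠] (0:ℝ)) (𝓝 (Z T a)) :=
        hca.tendsto.comp h1
      have h3 : Tendsto (fun t : ℝ => Z T (a + t • x₀)) (𝓝[≠] (0:ℝ)) (𝓝 (Z T x₀)) := by
        apply Tendsto.congr' _ tendsto_const_nhds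
        filter_upwards [self_mem_nhdsWithin] with t ht
        exact (main _ (hne t ht)).symm
      exact tendsto_nhds_unique h2 h3
    · exact main a haV
  have he : (Pi.single (⟨n - 1, by omega⟩ : Fin n) 1 : Fin n → ℝ) ≠ 0 := by
    intro h
    have := congrFun h (⟨n - 1, by omega⟩ : Fin n)
    simp at this
  rw [const x hx, const _ he]
end

section
/- Let T ⊆ ℝⁿ be a simplex with vertex at the origin of dimension n−1 contained in e_nᐩ (the hyperplane orthogonal to e_n), and let Z be an SL(n) contravariant map from origin-vertex simplices to C(ℝⁿ \ {o}). Then for x = (x₁,...,x_n) with x_n ≠ 0, Z(T)(x) = Z(T)(x_n e_n); and for x ≠ o with x_n = 0, Z(T)(x) = lim_{t→0} Z(T)(t e_n). -/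
/-- The shear matrix `1 + a eᵢᵀ` applied to a vector. -/
lemma shear_mulVec {n : ℕ} (a e y : Fin n → ℝ) (i : Fin n) (he : e = Pi.single i 1) :
    (1 + Matrix.vecMulVec a e).mulVec y = y + y i • a := by
  subst he
  rw [Matrix.add_mulVec, Matrix.one_mulVec]
  congr 1
  funext j
  simp [Matrix.mulVec, dotProduct, Matrix.vecMulVec_apply, Pi.single_apply,
    Finset.mul_sum, mul_comm, mul_assoc]

/-- For an `(n-1)`-dimensional origin simplex `T ⊆ eₙ⊥` and `Z` `SL(n)` contravariant
with values in `C(ℝⁿ \ {o})`: if `xₙ ≠ 0` then `Z T x = Z T (xₙ eₙ)`, while if `x ≠ o`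
and `xₙ = 0` then `Z T x = lim_{t→0} Z T (t eₙ)`. -/
theorem contravariant_hyperplane_case {n : ℕ} (hn : 3 ≤ n)
    (Z : Set (Fin n → ℝ) → (Fin n → ℝ) → ℝ)
    (hcont : ∀ T : Set (Fin n → ℝ), IsOriginSimplex T →
      ContinuousOn (Z T) {x : Fin n → ℝ | x ≠ 0})
    (hcontra : ∀ (φ : Matrix.SpecialLinearGroup (Fin n) ℝ) (T : Set (Fin n → ℝ)),
      IsOriginSimplex T → ∀ x : Fin n → ℝ, x ≠ 0 →
        Z ((fun y => (φ : Matrix (Fin n) (Fin n) ℝ).mulVec y) '' T) x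
          = Z T ((↑(φ⁻¹) : Matrix (Fin n) (Fin n) ℝ).mulVec x))
    (T : Set (Fin n → ℝ)) (hT : IsOriginSimplex T)
    (hdim : Module.finrank ℝ (Submodule.span ℝ T) = n - 1)
    (hsub : T ⊆ {x : Fin n → ℝ | x ⟨n - 1, by omega⟩ = 0}) :
    (∀ x : Fin n → ℝ, x ⟨n - 1, by omega⟩ ≠ 0 →
      Z T x = Z T (x ⟨n - 1, by omega⟩ • (Pi.single (⟨n - 1, by omega⟩ : Fin n) 1 : Fin n → ℝ))) ∧
    (∀ x : Fin n → ℝ, x ≠ 0 → x ⟨n - 1, by omega⟩ = 0 →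
      Filter.Tendsto
        (fun t : ℝ => Z T (t • (Pi.single (⟨n - 1, by omega⟩ : Fin n) 1 : Fin n → ℝ)))
        (nhdsWithin 0 {t : ℝ | t ≠ 0}) (nhds (Z T x))) := by
  set i : Fin n := ⟨n - 1, by omega⟩ with hi
  set e : Fin n → ℝ := Pi.single i 1 with he
  -- Part 1
  have part1 : ∀ x : Fin n → ℝ, x i ≠ 0 → Z T x = Z T (x i • e) := by
    intro x hx
    set c : ℝ := x i with hc
    set a : Fin n → ℝ := c⁻¹ • x - e with ha
    have hai : a i = 0 := by
      simp [ha, he, hc, inv_mul_cancel₀ (show x i ≠ 0 from hx)]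
    set M : Matrix (Fin n) (Fin n) ℝ := 1 + Matrix.vecMulVec a e with hM
    have hdet : M.det = 1 := by
      rw [hM, Matrix.vecMulVec_eq Unit, Matrix.det_one_add_replicateCol_mul_replicateRow, he,
        single_dotProduct, hai]
      ring
    set φ : Matrix.SpecialLinearGroup (Fin n) ℝ := ⟨M, hdet⟩ with hφ
    have hx0 : x ≠ 0 := fun h => hx (by simp [hc, h])
    have hMy : ∀ y : Fin n → ℝ, M.mulVec y = y + y i • a := fun y =>
      shear_mulVec a e y i he
    -- the image of T under φ is T
    have himg : (fun y => (φ : Matrix (Fin n) (Fin n) ℝ).mulVec y) '' T = T := by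
      have : Set.EqOn (fun y => (φ : Matrix (Fin n) (Fin n) ℝ).mulVec y) id T := by
        intro y hy
        have hyi : y i = 0 := hsub hy
        simp only [hφ, id]
        rw [hMy y, hyi]
        simp
      rw [Set.EqOn.image_eq this, Set.image_id]
    -- M maps c • e to x
    have hMce : M.mulVec (c • e) = x := by
      rw [hMy]
      have : (c • e) i = c := by simp [he]
      rw [this]
      have : c • e + c • a = c • (c⁻¹ • x) := by
        rw [ha, smul_sub]
        abel_nf
      rw [this, smul_inv_smul₀ hx]
    -- hence φ⁻¹ maps x to c • e
    have hinv : (↑(φ⁻¹) : Matrix (Fin n) (Fin n) ℝ).mulVec x = c • e := by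
      have h1 : (↑(φ⁻¹) : Matrix (Fin n) (Fin n) ℝ) * (↑φ : Matrix (Fin n) (Fin n) ℝ) = 1 := by
        rw [← Matrix.SpecialLinearGroup.coe_mul, inv_mul_cancel,
          Matrix.SpecialLinearGroup.coe_one]
      calc (↑(φ⁻¹) : Matrix (Fin n) (Fin n) ℝ).mulVec x
          = (↑(φ⁻¹) : Matrix (Fin n) (Fin n) ℝ).mulVec
              ((↑φ : Matrix (Fin n) (Fin n) ℝ).mulVec (c • e)) := by
            rw [show (↑φ : Matrix (Fin n) (Fin n) ℝ) = M from rfl, hMce]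
        _ = ((↑(φ⁻¹) : Matrix (Fin n) (Fin n) ℝ) * (↑φ : Matrix (Fin n) (Fin n) ℝ)).mulVec
              (c • e) := by rw [← Matrix.mulVec_mulVec]
        _ = c • e := by rw [h1, Matrix.one_mulVec]
    have := hcontra φ T hT x hx0
    rw [himg, hinv] at this
    exact this
  refine ⟨part1, ?_⟩
  -- Part 2
  intro x hx0 hxi
  have hZx : ContinuousAt (Z T) x :=
    (hcont T hT).continuousAt (IsOpen.mem_nhds isOpen_compl_singleton hx0)
  have hline : Filter.Tendsto (fun t : ℝ => x + t • e) (nhds 0) (nhds x) := by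
    have : Continuous fun t : ℝ => x + t • e := by continuity
    have h := this.tendsto 0
    simpa using h
  have hmain : Filter.Tendsto (fun t : ℝ => Z T (x + t • e)) (nhdsWithin 0 {t : ℝ | t ≠ 0})
      (nhds (Z T x)) :=
    (hZx.tendsto.comp hline).mono_left nhdsWithin_le_nhds
  apply hmain.congr'
  filter_upwards [self_mem_nhdsWithin] with t ht
  have hti : (x + t • e) i = t := by simp [hxi, he]
  have h := part1 (x + t • e) (by rw [hti]; exact ht)
  rw [h, hti]
end
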